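/- arXiv:2009.00641 — 2 statements merged into one kernel-verified Lean document; each statement's English description precedes it below -/
import Mathlib

section
/- (Regularized control converges to the orthogonal projection.) Let A : X → Y be a bounded linear operator between two Hilbert spaces X and Y. For any y ∈ Y and α > 0, set x_α := (A* A + α I)⁻¹ A* y. Then A x_α converges in Y, as α → 0⁺, to P_{cl(Ran A)} y, the orthogonal projection of y onto the closure of the range of A. -/
open Filter Topology RCLike
open scoped InnerProductSpace

/-- **Regularized control converges to the orthogonal projection**
(Lemma 2.4, after [Oksanen, Lemma 1]).  Let `A : X → Y` be a bounded linear
operator between Hilbert spaces.  For `y ∈ Y` and `α > 0` let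
`x_α := (A* A + α I)⁻¹ A* y`, i.e. `x_α` solves `(A* A + α I) x_α = A* y`.
Then `A x_α → P_{cl(Ran A)} y` as `α → 0⁺`, where `P_{cl(Ran A)}` is the
orthogonal projection onto the closure of the range of `A`. -/
theorem regularized_control_tendsto_orthogonalProjection
    {𝕜 X Y : Type*} [RCLike 𝕜]
    [NormedAddCommGroup X] [InnerProductSpace 𝕜 X] [CompleteSpace X]
    [NormedAddCommGroup Y] [InnerProductSpace 𝕜 Y] [CompleteSpace Y]
    (A : X →L[𝕜] Y) (y : Y) (x : ℝ → X)
    (hx : ∀ α : ℝ, 0 < α →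
      ContinuousLinearMap.adjoint A (A (x α)) + (α : 𝕜) • (x α) =
        ContinuousLinearMap.adjoint A y) :
    Tendsto (fun α : ℝ => A (x α)) (𝓝[>] 0)
      (𝓝 (Submodule.orthogonalProjectionOnto (LinearMap.range (A : X →ₗ[𝕜] Y)).topologicalClosure y : Y)) := by
  set K := (LinearMap.range (A : X →ₗ[𝕜] Y)).topologicalClosure with hK
  set z : Y := (Submodule.orthogonalProjectionOnto K y : Y) with hz
  have hzK : z ∈ K := (Submodule.orthogonalProjectionOnto K y).2
  have hyz : y - z ∈ Kᗮ := K.sub_starProjection_mem_orthogonal y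
  have hmemK : ∀ v : X, A v ∈ K := fun v =>
    Submodule.le_topologicalClosure _ (LinearMap.mem_range_self A.toLinearMap v)
  -- Pythagoras
  have pyth : ∀ v : Y, v ∈ K → ‖v - y‖^2 = ‖v - z‖^2 + ‖z - y‖^2 := by
    intro v hv
    have hzyK : z - y ∈ Kᗮ := by
      have := Kᗮ.neg_mem hyz
      simpa using this
    have h0 : ⟪v - z, z - y⟫_𝕜 = 0 :=
      (Submodule.mem_orthogonal K _).mp hzyK _ (K.sub_mem hv hzK)
    have hsplit : v - y = (v - z) + (z - y) := by abel
    rw [hsplit, @norm_add_sq 𝕜, h0]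
    simp
  -- key inequality
  have key : ∀ α : ℝ, 0 < α → ∀ u : X,
      ‖A (x α) - z‖^2 ≤ ‖A u - z‖^2 + α * ‖u‖^2 := by
    intro α hα u
    set a := x α with ha
    set w := u - a with hw
    have hEL : ContinuousLinearMap.adjoint A (A a - y) + (α : 𝕜) • a = 0 := by
      rw [map_sub, sub_add_eq_add_sub, hx α hα, sub_self]
    have horth : re (⟪A a - y, A w⟫_𝕜) + α * re (⟪a, w⟫_𝕜) = 0 := by
      have h1 : ⟪A a - y, A w⟫_𝕜 = ⟪ContinuousLinearMap.adjoint A (A a - y), w⟫_𝕜 :=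
        (ContinuousLinearMap.adjoint_inner_left A w (A a - y)).symm
      have h2 : ((α : 𝕜)) * ⟪a, w⟫_𝕜 = ⟪(α : 𝕜) • a, w⟫_𝕜 := by
        rw [inner_smul_left, RCLike.conj_ofReal]
      calc re (⟪A a - y, A w⟫_𝕜) + α * re (⟪a, w⟫_𝕜)
          = re (⟪ContinuousLinearMap.adjoint A (A a - y), w⟫_𝕜 + ⟪(α : 𝕜) • a, w⟫_𝕜) := by
            rw [map_add, ← h1, ← h2, RCLike.re_ofReal_mul]
        _ = re (⟪ContinuousLinearMap.adjoint A (A a - y) + (α : 𝕜) • a, w⟫_𝕜) := by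
            rw [← inner_add_left]
        _ = 0 := by rw [hEL, inner_zero_left, map_zero]
    have e1 : ‖A u - y‖^2 = ‖A a - y‖^2 + 2 * re (⟪A a - y, A w⟫_𝕜) + ‖A w‖^2 := by
      have hsplit : A u - y = (A a - y) + A w := by
        rw [hw, map_sub]; abel
      rw [hsplit, @norm_add_sq 𝕜]
    have e2 : α * ‖u‖^2 = α * ‖a‖^2 + 2 * (α * re (⟪a, w⟫_𝕜)) + α * ‖w‖^2 := by
      have hsplit : u = a + w := by rw [hw]; abel
      rw [hsplit, @norm_add_sq 𝕜]; ring
    have p1 := pyth (A a) (hmemK a)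
    have p2 := pyth (A u) (hmemK u)
    have n1 : (0:ℝ) ≤ ‖A w‖^2 := sq_nonneg _
    have n2 : (0:ℝ) ≤ α * ‖w‖^2 := mul_nonneg hα.le (sq_nonneg _)
    have n3 : (0:ℝ) ≤ α * ‖a‖^2 := mul_nonneg hα.le (sq_nonneg _)
    linarith
  -- density + ε-δ argument
  rw [Metric.tendsto_nhdsWithin_nhds]
  intro ε hε
  have hzcl : z ∈ closure ((LinearMap.range (A : X →ₗ[𝕜] Y) : Submodule 𝕜 Y) : Set Y) := by
    rw [← Submodule.topologicalClosure_coe]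
    exact hzK
  obtain ⟨b, hb, hbz⟩ := Metric.mem_closure_iff.mp hzcl (ε/2) (by positivity)
  obtain ⟨u, hu⟩ := hb
  refine ⟨(ε^2/2) / (‖u‖^2 + 1), by positivity, ?_⟩
  intro α hα hdist
  have hαpos : 0 < α := hα
  have hαlt : α < (ε^2/2) / (‖u‖^2 + 1) := by
    rw [Real.dist_eq, sub_zero, abs_of_pos hαpos] at hdist
    exact hdist
  have h1 : ‖A u - z‖ < ε/2 := by
    rw [← dist_eq_norm, dist_comm, show A u = b from hu]
    exact hbz
  have h1' : ‖A u - z‖^2 < (ε/2)^2 := by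
    have := sq_nonneg ‖A u - z‖
    nlinarith [norm_nonneg (A u - z)]
  have h2 : α * ‖u‖^2 < ε^2/2 := by
    have hden : (0:ℝ) < ‖u‖^2 + 1 := by positivity
    calc α * ‖u‖^2 ≤ α * (‖u‖^2 + 1) := by nlinarith
      _ < (ε^2/2) / (‖u‖^2 + 1) * (‖u‖^2 + 1) := by
          exact mul_lt_mul_of_pos_right hαlt hden
      _ = ε^2/2 := div_mul_cancel₀ _ hden.ne'
  have hkey := key α hαpos u
  have hlt : ‖A (x α) - z‖^2 < ε^2 := by nlinarith
  rw [dist_eq_norm]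
  exact lt_of_pow_lt_pow_left₀ 2 hε.le (by nlinarith [norm_nonneg (A (x α) - z)])
end

section
/- Let A : X → Y be a bounded linear operator between two Hilbert spaces X and Y whose range is dense in Y. For any y ∈ Y and α > 0, set x_α := (A* A + α I)⁻¹ A* y. Then A x_α → y in Y as α → 0⁺. -/
open Filter Topology RCLike

lemma tikhonov_key
    {𝕜 X Y : Type*} [RCLike 𝕜]
    [NormedAddCommGroup X] [InnerProductSpace 𝕜 X] [CompleteSpace X]
    [NormedAddCommGroup Y] [InnerProductSpace 𝕜 Y] [CompleteSpace Y]
    (A : X →L[𝕜] Y) (y : Y) (α : ℝ) (hα : 0 < α) (u z : X)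
    (hu : ContinuousLinearMap.adjoint A (A u) + (α : 𝕜) • u =
      ContinuousLinearMap.adjoint A y) :
    ‖A u - y‖ ^ 2 ≤ ‖A z - y‖ ^ 2 + α * ‖z‖ ^ 2 := by
  have h0 : ContinuousLinearMap.adjoint A (A u - y) + (α : 𝕜) • u = 0 := by
    rw [map_sub]
    rw [sub_add_eq_add_sub, hu, sub_self]
  have cross : re (inner 𝕜 (A u - y) (A (z - u)))
      + α * re (inner 𝕜 u (z - u)) = 0 := by
    have h1 : (inner 𝕜 (ContinuousLinearMap.adjoint A (A u - y) + (α : 𝕜) • u) (z - u)) = 0 := by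
      rw [h0, inner_zero_left]
    rw [inner_add_left, ContinuousLinearMap.adjoint_inner_left, inner_smul_left] at h1
    have h2 := congrArg re h1
    simpa [RCLike.conj_ofReal, RCLike.re_ofReal_mul] using h2
  have e1 : A z - y = (A u - y) + A (z - u) := by
    rw [map_sub]; abel
  have e2 : z = u + (z - u) := by abel
  have n1 : ‖A z - y‖ ^ 2 = ‖A u - y‖ ^ 2
      + 2 * re (inner 𝕜 (A u - y) (A (z - u))) + ‖A (z - u)‖ ^ 2 := by
    rw [e1]; exact norm_add_sq (𝕜 := 𝕜) _ _
  have n2 : ‖z‖ ^ 2 = ‖u‖ ^ 2 + 2 * re (inner 𝕜 u (z - u)) + ‖z - u‖ ^ 2 := by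
    conv_lhs => rw [e2]
    exact norm_add_sq (𝕜 := 𝕜) _ _
  nlinarith [sq_nonneg ‖A (z - u)‖, sq_nonneg ‖z - u‖, sq_nonneg ‖u‖,
    mul_nonneg hα.le (sq_nonneg ‖z - u‖), mul_nonneg hα.le (sq_nonneg ‖u‖)]

/-- **Regularized control with dense range.**  Let `A : X → Y` be a bounded
linear operator between Hilbert spaces whose range is dense in `Y`.  For
`y ∈ Y` and `α > 0` let `x_α := (A* A + α I)⁻¹ A* y`, i.e. `x_α` solves
`(A* A + α I) x_α = A* y`.  Then `A x_α → y` in `Y` as `α → 0⁺`. -/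
theorem regularized_control_tendsto_of_denseRange
    {𝕜 X Y : Type*} [RCLike 𝕜]
    [NormedAddCommGroup X] [InnerProductSpace 𝕜 X] [CompleteSpace X]
    [NormedAddCommGroup Y] [InnerProductSpace 𝕜 Y] [CompleteSpace Y]
    (A : X →L[𝕜] Y) (hA : DenseRange A) (y : Y) (x : ℝ → X)
    (hx : ∀ α : ℝ, 0 < α →
      ContinuousLinearMap.adjoint A (A (x α)) + (α : 𝕜) • (x α) =
        ContinuousLinearMap.adjoint A y) :
    Tendsto (fun α : ℝ => A (x α)) (𝓝[>] 0) (𝓝 y) := by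
  rw [Metric.tendsto_nhds]
  intro ε hε
  obtain ⟨z, hz⟩ := hA.exists_dist_lt y (show (0:ℝ) < ε/2 by linarith)
  have hz' : ‖A z - y‖ < ε / 2 := by
    rwa [dist_comm, dist_eq_norm] at hz
  set δ : ℝ := (ε ^ 2 / 2) / (‖z‖ ^ 2 + 1) with hδdef
  have hδ : 0 < δ := by positivity
  filter_upwards [Ioo_mem_nhdsGT_of_mem (Set.mem_Ico.2 ⟨le_refl 0, hδ⟩)] with α hα
  obtain ⟨hα0, hαδ⟩ := hα
  have key := tikhonov_key A y α hα0 (x α) z (hx α hα0)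
  have hb : α * ‖z‖ ^ 2 < ε ^ 2 / 2 := by
    have h1 : α * (‖z‖ ^ 2 + 1) < δ * (‖z‖ ^ 2 + 1) := by
      apply mul_lt_mul_of_pos_right hαδ; positivity
    have h2 : δ * (‖z‖ ^ 2 + 1) = ε ^ 2 / 2 := by
      rw [hδdef]; field_simp
    nlinarith
  have hz2 : ‖A z - y‖ ^ 2 < ε ^ 2 / 2 := by
    nlinarith [norm_nonneg (A z - y)]
  have hlt : ‖A (x α) - y‖ ^ 2 < ε ^ 2 := by linarith
  rw [dist_eq_norm]
  nlinarith [norm_nonneg (A (x α) - y)]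
end
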